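/- Let n ≥ 1 be an integer and let ω = exp(2πi/n) ∈ ℂ. For every integer u with 0 ≤ u ≤ n−1 one has Σ_{j=1}^{n−1} ω^{ju}/(1 − ω^{−j}) = (n−1)/2 − u (an equality of complex numbers, where the right-hand side is the rational number (n−1)/2 − u viewed in ℂ). -/

import Mathlib

open Finset

/-- For `n ≥ 1`, `ω = exp(2πi/n)` and `0 ≤ u ≤ n-1`:
`∑_{j=1}^{n-1} ω^{ju}/(1 - ω^{-j}) = (n-1)/2 - u`. -/
theorem alpha_sum_eval (n : ℕ) (hn : 1 ≤ n) (ω : ℂ)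
    (hω : ω = Complex.exp (2 * Real.pi * Complex.I / n))
    (u : ℕ) (hu : u ≤ n - 1) :
    ∑ j ∈ Finset.Icc 1 (n - 1), ω ^ (j * u) / (1 - ω ^ (-(j : ℤ))) =
      ((n : ℂ) - 1) / 2 - (u : ℂ) := by
  obtain ⟨m, rfl⟩ : ∃ m, n = m + 1 := ⟨n - 1, by omega⟩
  simp only [Nat.add_sub_cancel] at hu ⊢
  have hprim : IsPrimitiveRoot ω (m + 1) := by
    rw [hω]; exact Complex.isPrimitiveRoot_exp (m + 1) (by omega)
  have hωn : ω ^ (m + 1) = 1 := hprim.pow_eq_one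
  have hω0 : ω ≠ 0 := hprim.ne_zero (by omega)
  have hpow_ne : ∀ j : ℕ, 1 ≤ j → j ≤ m → ω ^ j ≠ 1 := fun j h1 h2 =>
    hprim.pow_ne_one_of_pos_of_lt (by omega) (by omega)
  have hden : ∀ j : ℕ, 1 ≤ j → j ≤ m → ω ^ j - 1 ≠ 0 := fun j h1 h2 =>
    sub_ne_zero.mpr (hpow_ne j h1 h2)
  -- geometric sum lemma
  have hgeom : ∀ k : ℕ, 1 ≤ k → k ≤ m →
      ∑ j ∈ Icc 1 m, ω ^ (j * k) = -1 := by
    intro k h1 h2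
    have hz : ω ^ k ≠ 1 := hpow_ne k h1 h2
    have h0 : ∑ j ∈ range (m + 1), (ω ^ k) ^ j = 0 := by
      rw [geom_sum_eq hz, ← pow_mul, mul_comm, pow_mul, hωn, one_pow, sub_self, zero_div]
    have hsplit : ∑ j ∈ range (m + 1), (ω ^ k) ^ j
        = (∑ j ∈ range m, (ω ^ k) ^ (j + 1)) + (ω ^ k) ^ 0 :=
      Finset.sum_range_succ' _ m
    have hIcc : ∑ j ∈ Icc 1 m, ω ^ (j * k) = ∑ j ∈ range m, (ω ^ k) ^ (j + 1) := by
      rw [← Finset.Ico_add_one_right_eq_Icc, Finset.sum_Ico_eq_sum_range]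
      refine Finset.sum_congr rfl fun j hj => ?_
      rw [← pow_mul]; ring_nf
    rw [hIcc]
    have := hsplit
    rw [h0] at this
    simp only [pow_zero] at this
    linear_combination -this
  -- rewrite each term
  have hterm : ∀ v : ℕ, ∑ j ∈ Icc 1 m, ω ^ (j * v) / (1 - ω ^ (-(j : ℤ)))
      = ∑ j ∈ Icc 1 m, ω ^ (j * (v + 1)) / (ω ^ j - 1) := by
    intro v
    refine Finset.sum_congr rfl fun j hj => ?_
    simp only [Finset.mem_Icc] at hj
    have hz0 : ω ^ j ≠ 0 := pow_ne_zero _ hω0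
    have hz1 : ω ^ j - 1 ≠ 0 := hden j hj.1 hj.2
    rw [zpow_neg, zpow_natCast]
    rw [show (1 : ℂ) - (ω ^ j)⁻¹ = (ω ^ j - 1) / ω ^ j by field_simp]
    rw [div_div_eq_mul_div, ← pow_add, Nat.mul_succ]
  rw [hterm]
  -- main induction
  have hbase : ∑ j ∈ Icc 1 m, ω ^ (j * 1) / (ω ^ j - 1) = (m : ℂ) / 2 := by
    simp only [mul_one]
    have hIcc : ∑ j ∈ Icc 1 m, ω ^ j / (ω ^ j - 1)
        = ∑ j ∈ range m, ω ^ (j + 1) / (ω ^ (j + 1) - 1) := by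
      rw [← Finset.Ico_add_one_right_eq_Icc, Finset.sum_Ico_eq_sum_range]
      refine Finset.sum_congr rfl fun j hj => ?_
      rw [add_comm]
    set F : ℕ → ℂ := fun k => ω ^ k / (ω ^ k - 1) with hF
    have hrefl : ∑ j ∈ range m, F (j + 1) = ∑ j ∈ range m, F (m - j) := by
      rw [← Finset.sum_range_reflect (fun j => F (j + 1)) m]
      refine Finset.sum_congr rfl fun j hj => ?_
      simp only [Finset.mem_range] at hj
      congr 1
      omega
    have hpair : ∀ j ∈ range m, F (j + 1) + F (m - j) = 1 := by
      intro j hj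
      simp only [Finset.mem_range] at hj
      set a := j + 1
      set b := m - j
      have hab : a + b = m + 1 := by omega
      have h1 : ω ^ a * ω ^ b = 1 := by rw [← pow_add, hab, hωn]
      have hbinv : ω ^ b = (ω ^ a)⁻¹ := eq_inv_of_mul_eq_one_right h1
      have hz0 : ω ^ a ≠ 0 := pow_ne_zero _ hω0
      have hz1 : ω ^ a - 1 ≠ 0 := hden a (by omega) (by omega)
      simp only [hF, hbinv]
      have key : ∀ z : ℂ, z ≠ 0 → z - 1 ≠ 0 → z / (z - 1) + z⁻¹ / (z⁻¹ - 1) = 1 := by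
        intro z hz h1
        have h2 : (1 : ℂ) - z ≠ 0 := fun h => h1 (by linear_combination -h)
        rw [show z⁻¹ - 1 = (1 - z) / z by field_simp]
        rw [div_div_eq_mul_div, inv_mul_cancel₀ hz]
        rw [div_add_div _ _ h1 h2, div_eq_one_iff_eq (mul_ne_zero h1 h2)]
        ring
      exact key _ hz0 hz1
    have h2S : (∑ j ∈ range m, F (j + 1)) + (∑ j ∈ range m, F (j + 1)) = m := by
      nth_rewrite 2 [hrefl]
      rw [← Finset.sum_add_distrib]
      rw [Finset.sum_congr rfl hpair]
      simp
    rw [hIcc]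
    have : (2 : ℂ) ≠ 0 := two_ne_zero
    field_simp
    linear_combination h2S
  have H : ∀ v : ℕ, v ≤ m →
      ∑ j ∈ Icc 1 m, ω ^ (j * (v + 1)) / (ω ^ j - 1) = (m : ℂ) / 2 - v := by
    intro v
    induction v with
    | zero => intro _; simpa using hbase
    | succ v ih =>
      intro hv
      have hprev := ih (by omega)
      have hdiff : ∑ j ∈ Icc 1 m, ω ^ (j * (v + 1)) / (ω ^ j - 1)
          - ∑ j ∈ Icc 1 m, ω ^ (j * (v + 1 + 1)) / (ω ^ j - 1) = 1 := by
        rw [← Finset.sum_sub_distrib]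
        have : ∀ j ∈ Icc 1 m,
            ω ^ (j * (v + 1)) / (ω ^ j - 1) - ω ^ (j * (v + 1 + 1)) / (ω ^ j - 1)
            = -(ω ^ (j * (v + 1))) := by
          intro j hj
          simp only [Finset.mem_Icc] at hj
          have hz1 : ω ^ j - 1 ≠ 0 := hden j hj.1 hj.2
          rw [div_sub_div_same, Nat.mul_succ, pow_add]
          field_simp
          ring
        rw [Finset.sum_congr rfl this, Finset.sum_neg_distrib, hgeom (v + 1) (by omega) (by omega)]
        ring
      have : ∑ j ∈ Icc 1 m, ω ^ (j * (v + 1 + 1)) / (ω ^ j - 1)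
          = (m : ℂ) / 2 - v - 1 := by linear_combination hprev - hdiff
      rw [this]
      push_cast
      ring
  rw [H u hu]
  push_cast
  ring
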